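/- If M is an n×n Hermitian complex matrix that is minimal, i.e., ‖M‖ ≤ ‖M + D‖ for all real diagonal matrices D (operator norm), then -‖M‖ is an eigenvalue of M. -/

import Mathlib

open scoped Matrix.Norms.L2Operator Pointwise

noncomputable def opNorm {n : Type*} [Fintype n] [DecidableEq n] (M : Matrix n n ℂ) : ℝ :=
  ‖(Matrix.toEuclideanCLM (𝕜 := ℂ) M : EuclideanSpace ℂ n →L[ℂ] EuclideanSpace ℂ n)‖

/-- `M` is minimal: its operator norm is ≤ that of `M + D` for every real diagonal `D`. -/
def IsMinimal {n : Type*} [Fintype n] [DecidableEq n] (M : Matrix n n ℂ) : Prop :=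
  ∀ d : n → ℝ, opNorm M ≤ opNorm (M + Matrix.diagonal fun i => (d i : ℂ))

noncomputable instance {n : Type*} [Fintype n] [DecidableEq n] :
    CStarAlgebra (Matrix n n ℂ) := {}

/-- For a Hermitian matrix, the (L2 operator) norm is at most `c` when all points of the
real spectrum have absolute value at most `c`. -/
lemma norm_le_of_forall_spectrum {n : Type*} [Fintype n] [DecidableEq n]
    (N : Matrix n n ℂ) (hN : N.IsHermitian) {c : ℝ} (hc : 0 ≤ c)
    (h : ∀ x ∈ spectrum ℝ N, |x| ≤ c) : ‖N‖ ≤ c := by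
  have hsa : IsSelfAdjoint N := hN.isSelfAdjoint
  have hrad := hsa.toReal_spectralRadius_complex_eq_norm
  rw [← hrad]
  have : spectralRadius ℂ N ≤ ENNReal.ofReal c := by
    rw [spectralRadius]
    refine iSup₂_le fun k hk => ?_
    have hre : k = (k.re : ℂ) := hsa.mem_spectrum_eq_re hk
    have hk' : (k.re : ℝ) ∈ spectrum ℝ N := by
      rw [← spectrum.algebraMap_mem_iff ℂ]
      simpa [Complex.coe_algebraMap] using hre ▸ hk
    have := h k.re hk'
    have hnorm : ‖k‖ ≤ c := by
      rw [hre, Complex.norm_real, Real.norm_eq_abs]; exact this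
    rw [← ENNReal.ofReal_coe_nnreal, coe_nnnorm]
    exact ENNReal.ofReal_le_ofReal hnorm
  calc (spectralRadius ℂ N).toReal ≤ (ENNReal.ofReal c).toReal :=
        ENNReal.toReal_mono ENNReal.ofReal_ne_top this
    _ = c := ENNReal.toReal_ofReal hc

theorem stmt0 {n : Type*} [Fintype n] [DecidableEq n] [Nonempty n]
    (M : Matrix n n ℂ) (hM : M.IsHermitian) (hmin : IsMinimal M) :
    ∃ v : n → ℂ, v ≠ 0 ∧ M.mulVec v = ((-(opNorm M) : ℝ) : ℂ) • v := by
  have hnorm : ∀ X : Matrix n n ℂ, opNorm X = ‖X‖ := fun _ => rfl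
  obtain ⟨i0, -, hi0⟩ := Finset.exists_min_image Finset.univ hM.eigenvalues
    ⟨Classical.arbitrary n, Finset.mem_univ _⟩
  obtain ⟨i1, -, hi1⟩ := Finset.exists_max_image Finset.univ hM.eigenvalues
    ⟨Classical.arbitrary n, Finset.mem_univ _⟩
  set a := hM.eigenvalues i0 with ha
  set b := hM.eigenvalues i1 with hb
  have hab : a ≤ b := hi0 i1 (Finset.mem_univ _)
  -- lower bounds for the norm
  have hspec : ∀ i, ((hM.eigenvalues i : ℝ) : ℂ) ∈ spectrum ℂ M := fun i => by
    have := hM.eigenvalues_mem_spectrum_real i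
    rw [← spectrum.algebraMap_mem_iff ℂ] at this
    simpa [Complex.coe_algebraMap] using this
  have habs : ∀ i, |hM.eigenvalues i| ≤ ‖M‖ := fun i => by
    have := spectrum.norm_le_norm_of_mem (hspec i)
    simpa [Complex.norm_real, Real.norm_eq_abs] using this
  -- the shift
  set c : ℝ := (a + b) / 2 with hc
  set N : Matrix n n ℂ := M + Matrix.diagonal fun _ : n => ((-c : ℝ) : ℂ) with hN
  have hNalg : N = M + algebraMap ℝ (Matrix n n ℂ) (-c) := by
    rw [hN, Matrix.algebraMap_eq_diagonal]
    congr 1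
  have hNherm : N.IsHermitian := by
    rw [hNalg]
    exact hM.add ((Matrix.isHermitian_diagonal_iff ).mpr fun i => by
      simp [Matrix.algebraMap_eq_diagonal, IsSelfAdjoint, Pi.algebraMap_apply,
        Complex.coe_algebraMap])
  have hNspec : spectrum ℝ N = spectrum ℝ M + ({-c} : Set ℝ) := by
    rw [hNalg, ← spectrum.add_singleton_eq]
  have hNle : ‖N‖ ≤ (b - a) / 2 := by
    refine norm_le_of_forall_spectrum N hNherm (by linarith) fun x hx => ?_
    rw [hNspec] at hx
    obtain ⟨y, hy, z, hz, rfl⟩ := hx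
    rw [Set.mem_singleton_iff] at hz
    subst hz
    rw [hM.spectrum_real_eq_range_eigenvalues] at hy
    obtain ⟨i, rfl⟩ := hy
    have h1 := hi0 i (Finset.mem_univ _)
    have h2 := hi1 i (Finset.mem_univ _)
    rw [abs_le]
    constructor <;> [skip; skip] <;> simp only [hc] <;> linarith
  have hMN : ‖M‖ ≤ ‖N‖ := by
    have := hmin fun _ => -c
    rwa [hnorm, hnorm] at this
  have hMa : a = -‖M‖ := by
    have h1 := habs i0
    have h2 := habs i1
    rw [abs_le] at h1 h2
    have : ‖M‖ ≤ (b - a) / 2 := le_trans hMN hNle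
    linarith [h1.1, h2.2]
  refine ⟨⇑(hM.eigenvectorBasis i0), ?_, ?_⟩
  · have h1 : ‖hM.eigenvectorBasis i0‖ = 1 := (hM.eigenvectorBasis).orthonormal.1 i0
    intro hv
    have h0 : hM.eigenvectorBasis i0 = 0 := by
      apply (WithLp.equiv 2 (n → ℂ)).injective
      simpa using hv
    rw [h0] at h1
    simp at h1
  · have := hM.mulVec_eigenvectorBasis i0
    rw [this, ← ha, hMa]
    rw [hnorm]
    funext j
    simp [Pi.smul_apply, Complex.real_smul]
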